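/- Let τ ∈ ℂ with Im τ > 0 and let x, y ∈ ℂ. Then A†(x,y|τ)³ − C†(x,y|τ)³ = exp(2iπτ)·exp(4ix+2iy)·( A†(x+πτ, y|τ)³ − C†(x+πτ, y|τ)³ ). -/

import Mathlib

open Complex

/-- The theta series A†(x,y|τ). -/
noncomputable def Adag (x y τ : ℂ) : ℂ :=
  ∑' m : ℤ, ∑' n : ℤ,
    Complex.exp (2 * Complex.I * Real.pi * τ * ((m : ℂ) ^ 2 + (m : ℂ) * (n : ℂ) + (n : ℂ) ^ 2)) *
    Complex.exp (2 * Complex.I * ((m : ℂ) + (n : ℂ)) * x) *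
    Complex.exp (2 * Complex.I * (n : ℂ) * y)

/-- The theta series C†(x,y|τ), with `ω = exp(2πi/3)`. -/
noncomputable def Cdag (x y τ : ℂ) : ℂ :=
  ∑' m : ℤ, ∑' n : ℤ,
    Complex.exp (2 * Real.pi * Complex.I / 3) ^ (m - n) *
    Complex.exp (2 * Complex.I * Real.pi * τ * ((m : ℂ) ^ 2 + (m : ℂ) * (n : ℂ) + (n : ℂ) ^ 2)) *
    Complex.exp (2 * Complex.I * ((m : ℂ) + (n : ℂ)) * x) *
    Complex.exp (2 * Complex.I * (n : ℂ) * y)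

namespace AdagAux

/-- Single-exponential form of the A-summand. -/
noncomputable def wA (x y τ : ℂ) (p : ℤ × ℤ) : ℂ :=
  Complex.exp (2 * Complex.I * Real.pi * τ *
      ((p.1 : ℂ) ^ 2 + (p.1 : ℂ) * (p.2 : ℂ) + (p.2 : ℂ) ^ 2) +
    2 * Complex.I * ((p.1 : ℂ) + (p.2 : ℂ)) * x + 2 * Complex.I * (p.2 : ℂ) * y)

/-- Single-exponential form of the C-summand. -/
noncomputable def wC (x y τ : ℂ) (p : ℤ × ℤ) : ℂ :=
  Complex.exp (((p.1 - p.2 : ℤ) : ℂ) * (2 * Real.pi * Complex.I / 3) +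
    (2 * Complex.I * Real.pi * τ *
      ((p.1 : ℂ) ^ 2 + (p.1 : ℂ) * (p.2 : ℂ) + (p.2 : ℂ) ^ 2) +
    2 * Complex.I * ((p.1 : ℂ) + (p.2 : ℂ)) * x + 2 * Complex.I * (p.2 : ℂ) * y))

lemma wC_eq (x y τ : ℂ) (p : ℤ × ℤ) :
    wC x y τ p = Complex.exp (((p.1 - p.2 : ℤ) : ℂ) * (2 * Real.pi * Complex.I / 3)) *
      wA x y τ p := by
  rw [wA, wC, Complex.exp_add]

lemma norm_wA (x y τ : ℂ) (p : ℤ × ℤ) :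
    ‖wA x y τ p‖ = Real.exp (-(2 * Real.pi * ((p.1 : ℝ) ^ 2 + p.1 * p.2 + p.2 ^ 2) * τ.im)
      - 2 * ((p.1 : ℝ) + p.2) * x.im - 2 * (p.2 : ℝ) * y.im) := by
  rw [wA, Complex.norm_exp]
  congr 1
  rw [show 2 * Complex.I * Real.pi * τ *
      ((p.1 : ℂ) ^ 2 + (p.1 : ℂ) * (p.2 : ℂ) + (p.2 : ℂ) ^ 2) +
    2 * Complex.I * ((p.1 : ℂ) + (p.2 : ℂ)) * x + 2 * Complex.I * (p.2 : ℂ) * y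
    = ((2 * Real.pi * ((p.1 : ℝ) ^ 2 + p.1 * p.2 + p.2 ^ 2) : ℝ) : ℂ) * τ * Complex.I
      + ((2 * ((p.1 : ℝ) + p.2) : ℝ) : ℂ) * x * Complex.I
      + ((2 * (p.2 : ℝ) : ℝ) : ℂ) * y * Complex.I from by push_cast; ring]
  simp only [Complex.add_re, Complex.mul_I_re, Complex.im_ofReal_mul]
  ring

lemma norm_wC (x y τ : ℂ) (p : ℤ × ℤ) : ‖wC x y τ p‖ = ‖wA x y τ p‖ := by
  rw [wC_eq, norm_mul]
  have : (((p.1 - p.2 : ℤ) : ℂ) * (2 * Real.pi * Complex.I / 3))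
      = ((2 * Real.pi * ((p.1 : ℝ) - p.2) / 3 : ℝ) : ℂ) * Complex.I := by push_cast; ring
  rw [Complex.norm_exp, this, Complex.mul_I_re, Complex.ofReal_im, neg_zero,
    Real.exp_zero, one_mul]

lemma summable_exp_int {T : ℝ} (hT : 0 < T) (c : ℝ) :
    Summable fun n : ℤ => Real.exp (-(Real.pi * T) * (n : ℝ) ^ 2 + c * |(n : ℝ)|) := by
  have h := summable_pow_mul_jacobiTheta₂_term_bound (c / (2 * Real.pi)) hT 0
  refine h.congr fun n => ?_
  simp only [pow_zero, one_mul]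
  congr 1
  have hπ : (Real.pi : ℝ) ≠ 0 := Real.pi_ne_zero
  push_cast
  field_simp
  ring

lemma summable_norm_wA (x y : ℂ) {τ : ℂ} (hτ : 0 < τ.im) :
    Summable fun p : ℤ × ℤ => ‖wA x y τ p‖ := by
  have h1 := summable_exp_int hτ (2 * |x.im|)
  have h2 := summable_exp_int hτ (2 * (|x.im| + |y.im|))
  refine Summable.of_nonneg_of_le (fun p => norm_nonneg _) (fun p => ?_)
    (h1.mul_of_nonneg h2 (fun n => (Real.exp_pos _).le) (fun n => (Real.exp_pos _).le))
  rw [norm_wA, ← Real.exp_add, Real.exp_le_exp]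
  obtain ⟨m, n⟩ := p
  simp only
  have e1 : -((m : ℝ) * x.im) ≤ |(m : ℝ)| * |x.im| := by
    calc -((m : ℝ) * x.im) ≤ |(m : ℝ) * x.im| := neg_le_abs _
    _ = |(m : ℝ)| * |x.im| := abs_mul _ _
  have e2 : -((n : ℝ) * x.im) ≤ |(n : ℝ)| * |x.im| := by
    calc -((n : ℝ) * x.im) ≤ |(n : ℝ) * x.im| := neg_le_abs _
    _ = |(n : ℝ)| * |x.im| := abs_mul _ _
  have e3 : -((n : ℝ) * y.im) ≤ |(n : ℝ)| * |y.im| := by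
    calc -((n : ℝ) * y.im) ≤ |(n : ℝ) * y.im| := neg_le_abs _
    _ = |(n : ℝ)| * |y.im| := abs_mul _ _
  have e4 : 0 ≤ Real.pi * τ.im * ((m : ℝ) + n) ^ 2 :=
    mul_nonneg (mul_nonneg Real.pi_pos.le hτ.le) (sq_nonneg _)
  nlinarith [e1, e2, e3, e4]

lemma summable_norm_wC (x y : ℂ) {τ : ℂ} (hτ : 0 < τ.im) :
    Summable fun p : ℤ × ℤ => ‖wC x y τ p‖ :=
  (summable_norm_wA x y hτ).congr fun p => (norm_wC x y τ p).symm

lemma Adag_eq (x y : ℂ) {τ : ℂ} (hτ : 0 < τ.im) :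
    Adag x y τ = ∑' p : ℤ × ℤ, wA x y τ p := by
  have hs := (summable_norm_wA x y hτ).of_norm
  rw [Adag]
  calc (∑' m : ℤ, ∑' n : ℤ,
      Complex.exp (2 * Complex.I * Real.pi * τ * ((m : ℂ) ^ 2 + (m : ℂ) * (n : ℂ) + (n : ℂ) ^ 2)) *
      Complex.exp (2 * Complex.I * ((m : ℂ) + (n : ℂ)) * x) *
      Complex.exp (2 * Complex.I * (n : ℂ) * y))
      = ∑' m : ℤ, ∑' n : ℤ, wA x y τ (m, n) :=
        tsum_congr fun m => tsum_congr fun n => by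
          rw [wA, Complex.exp_add, Complex.exp_add]
    _ = ∑' p : ℤ × ℤ, wA x y τ p :=
        (Summable.tsum_prod' hs fun m => hs.comp_injective (Prod.mk_right_injective m)).symm

lemma Cdag_eq (x y : ℂ) {τ : ℂ} (hτ : 0 < τ.im) :
    Cdag x y τ = ∑' p : ℤ × ℤ, wC x y τ p := by
  have hs := (summable_norm_wC x y hτ).of_norm
  rw [Cdag]
  calc (∑' m : ℤ, ∑' n : ℤ,
      Complex.exp (2 * Real.pi * Complex.I / 3) ^ (m - n) *
      Complex.exp (2 * Complex.I * Real.pi * τ * ((m : ℂ) ^ 2 + (m : ℂ) * (n : ℂ) + (n : ℂ) ^ 2)) *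
      Complex.exp (2 * Complex.I * ((m : ℂ) + (n : ℂ)) * x) *
      Complex.exp (2 * Complex.I * (n : ℂ) * y))
      = ∑' m : ℤ, ∑' n : ℤ, wC x y τ (m, n) :=
        tsum_congr fun m => tsum_congr fun n => by
          rw [wC, Complex.exp_add, Complex.exp_add, Complex.exp_add, Complex.exp_int_mul]
          ring
    _ = ∑' p : ℤ × ℤ, wC x y τ p :=
        (Summable.tsum_prod' hs fun m => hs.comp_injective (Prod.mk_right_injective m)).symm

/-- The index type for the expansion of the cube. -/
abbrev idx : Type := (ℤ × ℤ) × (ℤ × ℤ) × (ℤ × ℤ)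

/-- The reindexing map. -/
def phi : idx → idx
  | ((m1, n1), (m2, n2), (m3, n3)) =>
    if (m1 + m2 + m3 - (n1 + n2 + n3)) % 3 = 0 then ((m1, n1), (m2, n2), (m3, n3))
    else if (m1 + m2 + m3 - (n1 + n2 + n3)) % 3 = 1 then
      ((n1 + (m1 + m2 + m3 - (n1 + n2 + n3) - 1) / 3,
        -m1 - n1 + (n1 + n2 + n3) + (m1 + m2 + m3 - (n1 + n2 + n3) - 1) / 3),
       (n2 + (m1 + m2 + m3 - (n1 + n2 + n3) - 1) / 3,
        -m2 - n2 + (n1 + n2 + n3) + (m1 + m2 + m3 - (n1 + n2 + n3) - 1) / 3),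
       (n3 + (m1 + m2 + m3 - (n1 + n2 + n3) - 1) / 3,
        -m3 - n3 + (n1 + n2 + n3) + (m1 + m2 + m3 - (n1 + n2 + n3) - 1) / 3))
    else
      ((-m1 - n1 + (n1 + n2 + n3) + 2 * ((m1 + m2 + m3 - (n1 + n2 + n3) - 2) / 3) + 1,
        m1 - (m1 + m2 + m3 - (n1 + n2 + n3) - 2) / 3 - 1),
       (-m2 - n2 + (n1 + n2 + n3) + 2 * ((m1 + m2 + m3 - (n1 + n2 + n3) - 2) / 3) + 1,
        m2 - (m1 + m2 + m3 - (n1 + n2 + n3) - 2) / 3 - 1),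
       (-m3 - n3 + (n1 + n2 + n3) + 2 * ((m1 + m2 + m3 - (n1 + n2 + n3) - 2) / 3) + 1,
        m3 - (m1 + m2 + m3 - (n1 + n2 + n3) - 2) / 3 - 1))

/-- The inverse reindexing map. -/
def psi : idx → idx
  | ((m1, n1), (m2, n2), (m3, n3)) =>
    if (m1 + m2 + m3 - (n1 + n2 + n3)) % 3 = 0 then ((m1, n1), (m2, n2), (m3, n3))
    else if (m1 + m2 + m3 - (n1 + n2 + n3)) % 3 = 1 then
      ((-m1 - n1 + (n1 + n2 + n3) + 2 * ((m1 + m2 + m3 - (n1 + n2 + n3) - 1) / 3) + 1,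
        m1 - (m1 + m2 + m3 - (n1 + n2 + n3) - 1) / 3),
       (-m2 - n2 + (n1 + n2 + n3) + 2 * ((m1 + m2 + m3 - (n1 + n2 + n3) - 1) / 3) + 1,
        m2 - (m1 + m2 + m3 - (n1 + n2 + n3) - 1) / 3),
       (-m3 - n3 + (n1 + n2 + n3) + 2 * ((m1 + m2 + m3 - (n1 + n2 + n3) - 1) / 3) + 1,
        m3 - (m1 + m2 + m3 - (n1 + n2 + n3) - 1) / 3))
    else
      ((n1 + (m1 + m2 + m3 - (n1 + n2 + n3) - 2) / 3 + 1,
        -m1 - n1 + (n1 + n2 + n3) + (m1 + m2 + m3 - (n1 + n2 + n3) - 2) / 3 + 1),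
       (n2 + (m1 + m2 + m3 - (n1 + n2 + n3) - 2) / 3 + 1,
        -m2 - n2 + (n1 + n2 + n3) + (m1 + m2 + m3 - (n1 + n2 + n3) - 2) / 3 + 1),
       (n3 + (m1 + m2 + m3 - (n1 + n2 + n3) - 2) / 3 + 1,
        -m3 - n3 + (n1 + n2 + n3) + (m1 + m2 + m3 - (n1 + n2 + n3) - 2) / 3 + 1))

lemma left_inv : Function.LeftInverse psi phi := by
  rintro ⟨⟨m1, n1⟩, ⟨m2, n2⟩, ⟨m3, n3⟩⟩
  simp only [phi]
  split_ifs with h0 h1 <;>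
    · simp only [psi]
      split_ifs <;> simp only [Prod.mk.injEq] <;> omega

lemma right_inv : Function.RightInverse psi phi := by
  rintro ⟨⟨m1, n1⟩, ⟨m2, n2⟩, ⟨m3, n3⟩⟩
  simp only [psi]
  split_ifs with h0 h1 <;>
    · simp only [phi]
      split_ifs <;> simp only [Prod.mk.injEq] <;> omega

/-- The reindexing equivalence. -/
def e : idx ≃ idx := ⟨phi, psi, left_inv, right_inv⟩

/-- The key pointwise identity. -/
lemma key (x y τ : ℂ) (t : idx) :
    wA x y τ t.1 * (wA x y τ t.2.1 * wA x y τ t.2.2)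
      - wC x y τ t.1 * (wC x y τ t.2.1 * wC x y τ t.2.2)
    = Complex.exp (2 * Complex.I * Real.pi * τ) *
        (Complex.exp (4 * Complex.I * x + 2 * Complex.I * y) *
          (wA (x + Real.pi * τ) y τ (phi t).1 *
              (wA (x + Real.pi * τ) y τ (phi t).2.1 * wA (x + Real.pi * τ) y τ (phi t).2.2)
            - wC (x + Real.pi * τ) y τ (phi t).1 *
              (wC (x + Real.pi * τ) y τ (phi t).2.1 * wC (x + Real.pi * τ) y τ (phi t).2.2))) := by
  obtain ⟨⟨m1, n1⟩, ⟨m2, n2⟩, ⟨m3, n3⟩⟩ := t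
  simp only [phi]
  split_ifs with h0 h1
  · -- S ≡ 0 (mod 3): both differences vanish
    obtain ⟨j, hj⟩ : ∃ j, m1 + m2 + m3 - (n1 + n2 + n3) = 3 * j :=
      ⟨(m1 + m2 + m3 - (n1 + n2 + n3)) / 3, by omega⟩
    have hone : Complex.exp (((m1 - n1 : ℤ) : ℂ) * (2 * Real.pi * Complex.I / 3)) *
        (Complex.exp (((m2 - n2 : ℤ) : ℂ) * (2 * Real.pi * Complex.I / 3)) *
          Complex.exp (((m3 - n3 : ℤ) : ℂ) * (2 * Real.pi * Complex.I / 3))) = 1 := by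
      rw [← Complex.exp_add, ← Complex.exp_add]
      rw [show ((m1 - n1 : ℤ) : ℂ) * (2 * Real.pi * Complex.I / 3) +
          (((m2 - n2 : ℤ) : ℂ) * (2 * Real.pi * Complex.I / 3) +
            ((m3 - n3 : ℤ) : ℂ) * (2 * Real.pi * Complex.I / 3))
          = ((j : ℤ) : ℂ) * (2 * Real.pi * Complex.I) from by
        have hjc : ((m1 : ℂ) - n1) + ((m2 : ℂ) - n2) + ((m3 : ℂ) - n3) = 3 * (j : ℂ) := by
          exact_mod_cast congrArg (fun z : ℤ => (z : ℂ)) (by omega : (m1 - n1) + (m2 - n2) + (m3 - n3) = 3 * j)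
        push_cast
        linear_combination hjc * (2 * (Real.pi : ℂ) * Complex.I / 3)]
      exact Complex.exp_int_mul_two_pi_mul_I j
    have hC : ∀ x' : ℂ, wC x' y τ (m1, n1) * (wC x' y τ (m2, n2) * wC x' y τ (m3, n3))
        = wA x' y τ (m1, n1) * (wA x' y τ (m2, n2) * wA x' y τ (m3, n3)) := by
      intro x'
      rw [wC_eq, wC_eq, wC_eq]
      calc Complex.exp (((m1 - n1 : ℤ) : ℂ) * (2 * Real.pi * Complex.I / 3)) * wA x' y τ (m1, n1) *
          (Complex.exp (((m2 - n2 : ℤ) : ℂ) * (2 * Real.pi * Complex.I / 3)) * wA x' y τ (m2, n2) *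
            (Complex.exp (((m3 - n3 : ℤ) : ℂ) * (2 * Real.pi * Complex.I / 3)) * wA x' y τ (m3, n3)))
          = Complex.exp (((m1 - n1 : ℤ) : ℂ) * (2 * Real.pi * Complex.I / 3)) *
            (Complex.exp (((m2 - n2 : ℤ) : ℂ) * (2 * Real.pi * Complex.I / 3)) *
              Complex.exp (((m3 - n3 : ℤ) : ℂ) * (2 * Real.pi * Complex.I / 3))) *
            (wA x' y τ (m1, n1) * (wA x' y τ (m2, n2) * wA x' y τ (m3, n3))) := by ring
      _ = wA x' y τ (m1, n1) * (wA x' y τ (m2, n2) * wA x' y τ (m3, n3)) := by rw [hone, one_mul]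
    rw [hC, hC, sub_self, sub_self, mul_zero, mul_zero]
  · -- S ≡ 1 (mod 3)
    have hm3 : (m3 : ℂ) = (n1 : ℂ) + n2 + n3
        + 3 * ((m1 + m2 + m3 - (n1 + n2 + n3) - 1) / 3 : ℤ) + 1 - m1 - m2 := by
      exact_mod_cast congrArg (fun z : ℤ => (z : ℂ))
        (by omega : m3 = n1 + n2 + n3 + 3 * ((m1 + m2 + m3 - (n1 + n2 + n3) - 1) / 3) + 1 - m1 - m2)
    set k : ℤ := (m1 + m2 + m3 - (n1 + n2 + n3) - 1) / 3 with hk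
    have hA : wA x y τ (m1, n1) * (wA x y τ (m2, n2) * wA x y τ (m3, n3))
        = Complex.exp (2 * Complex.I * Real.pi * τ) *
          (Complex.exp (4 * Complex.I * x + 2 * Complex.I * y) *
            (wA (x + Real.pi * τ) y τ (n1 + k, -m1 - n1 + (n1 + n2 + n3) + k) *
              (wA (x + Real.pi * τ) y τ (n2 + k, -m2 - n2 + (n1 + n2 + n3) + k) *
                wA (x + Real.pi * τ) y τ (n3 + k, -m3 - n3 + (n1 + n2 + n3) + k)))) := by
      simp only [wA, ← Complex.exp_add]
      congr 1
      push_cast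
      rw [hm3]
      ring
    have hCeq : wC x y τ (m1, n1) * (wC x y τ (m2, n2) * wC x y τ (m3, n3))
        = Complex.exp (2 * Complex.I * Real.pi * τ) *
          (Complex.exp (4 * Complex.I * x + 2 * Complex.I * y) *
            (wC (x + Real.pi * τ) y τ (n1 + k, -m1 - n1 + (n1 + n2 + n3) + k) *
              (wC (x + Real.pi * τ) y τ (n2 + k, -m2 - n2 + (n1 + n2 + n3) + k) *
                wC (x + Real.pi * τ) y τ (n3 + k, -m3 - n3 + (n1 + n2 + n3) + k)))) := by
      simp only [wC, ← Complex.exp_add]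
      congr 1
      push_cast
      rw [hm3]
      ring
    rw [hA, hCeq]
    ring
  · -- S ≡ 2 (mod 3)
    have hm3 : (m3 : ℂ) = (n1 : ℂ) + n2 + n3
        + 3 * ((m1 + m2 + m3 - (n1 + n2 + n3) - 2) / 3 : ℤ) + 2 - m1 - m2 := by
      exact_mod_cast congrArg (fun z : ℤ => (z : ℂ))
        (by omega : m3 = n1 + n2 + n3 + 3 * ((m1 + m2 + m3 - (n1 + n2 + n3) - 2) / 3) + 2 - m1 - m2)
    set k : ℤ := (m1 + m2 + m3 - (n1 + n2 + n3) - 2) / 3 with hk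
    have hA : wA x y τ (m1, n1) * (wA x y τ (m2, n2) * wA x y τ (m3, n3))
        = Complex.exp (2 * Complex.I * Real.pi * τ) *
          (Complex.exp (4 * Complex.I * x + 2 * Complex.I * y) *
            (wA (x + Real.pi * τ) y τ (-m1 - n1 + (n1 + n2 + n3) + 2 * k + 1, m1 - k - 1) *
              (wA (x + Real.pi * τ) y τ (-m2 - n2 + (n1 + n2 + n3) + 2 * k + 1, m2 - k - 1) *
                wA (x + Real.pi * τ) y τ (-m3 - n3 + (n1 + n2 + n3) + 2 * k + 1, m3 - k - 1)))) := by
      simp only [wA, ← Complex.exp_add]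
      congr 1
      push_cast
      rw [hm3]
      ring
    have hCeq : wC x y τ (m1, n1) * (wC x y τ (m2, n2) * wC x y τ (m3, n3))
        = Complex.exp (2 * Complex.I * Real.pi * τ) *
          (Complex.exp (4 * Complex.I * x + 2 * Complex.I * y) *
            (wC (x + Real.pi * τ) y τ (-m1 - n1 + (n1 + n2 + n3) + 2 * k + 1, m1 - k - 1) *
              (wC (x + Real.pi * τ) y τ (-m2 - n2 + (n1 + n2 + n3) + 2 * k + 1, m2 - k - 1) *
                wC (x + Real.pi * τ) y τ (-m3 - n3 + (n1 + n2 + n3) + 2 * k + 1, m3 - k - 1)))) := by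
      simp only [wC, ← Complex.exp_add]
      congr 1
      push_cast
      rw [hm3]
      ring
    rw [hA, hCeq]
    ring

lemma cube_eq {w : ℤ × ℤ → ℂ} (hw : Summable fun p => ‖w p‖) :
    (∑' p : ℤ × ℤ, w p) ^ 3 = ∑' t : idx, w t.1 * (w t.2.1 * w t.2.2) := by
  have hpair : Summable fun q : (ℤ × ℤ) × (ℤ × ℤ) => ‖w q.1 * w q.2‖ :=
    ((hw.mul_of_nonneg hw (fun _ => norm_nonneg _) (fun _ => norm_nonneg _)).congr
      fun q => (norm_mul _ _).symm)
  rw [show (∑' p : ℤ × ℤ, w p) ^ 3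
      = (∑' p : ℤ × ℤ, w p) * ((∑' p : ℤ × ℤ, w p) * (∑' p : ℤ × ℤ, w p)) from by ring]
  rw [tsum_mul_tsum_of_summable_norm hw hw, tsum_mul_tsum_of_summable_norm hw hpair]

lemma summable_cube {w : ℤ × ℤ → ℂ} (hw : Summable fun p => ‖w p‖) :
    Summable fun t : idx => w t.1 * (w t.2.1 * w t.2.2) := by
  have hpair : Summable fun q : (ℤ × ℤ) × (ℤ × ℤ) => ‖w q.1 * w q.2‖ :=
    ((hw.mul_of_nonneg hw (fun _ => norm_nonneg _) (fun _ => norm_nonneg _)).congr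
      fun q => (norm_mul _ _).symm)
  exact Summable.of_norm (((hw.mul_of_nonneg hpair (fun _ => norm_nonneg _)
    (fun _ => norm_nonneg _)).congr fun t => (norm_mul _ _).symm))

end AdagAux

open AdagAux in
/-- Quasi-periodicity of `A†³ − C†³` in `x`. -/
theorem Adag_cube_minus_Cdag_cube (τ : ℂ) (hτ : 0 < τ.im) (x y : ℂ) :
    Adag x y τ ^ 3 - Cdag x y τ ^ 3
      = Complex.exp (2 * Complex.I * Real.pi * τ) *
          Complex.exp (4 * Complex.I * x + 2 * Complex.I * y) *
          (Adag (x + Real.pi * τ) y τ ^ 3 - Cdag (x + Real.pi * τ) y τ ^ 3) := by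
  have hA := summable_norm_wA x y hτ
  have hC := summable_norm_wC x y hτ
  have hA' := summable_norm_wA (x + Real.pi * τ) y hτ
  have hC' := summable_norm_wC (x + Real.pi * τ) y hτ
  rw [Adag_eq x y hτ, Cdag_eq x y hτ, Adag_eq (x + Real.pi * τ) y hτ,
    Cdag_eq (x + Real.pi * τ) y hτ, cube_eq hA, cube_eq hC, cube_eq hA', cube_eq hC',
    ← Summable.tsum_sub (summable_cube hA) (summable_cube hC),
    ← Summable.tsum_sub (summable_cube hA') (summable_cube hC'),
    mul_assoc, ← tsum_mul_left, ← tsum_mul_left]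
  rw [← Equiv.tsum_eq e (fun t : idx => Complex.exp (2 * Complex.I * Real.pi * τ) *
    (Complex.exp (4 * Complex.I * x + 2 * Complex.I * y) *
      (wA (x + Real.pi * τ) y τ t.1 * (wA (x + Real.pi * τ) y τ t.2.1 * wA (x + Real.pi * τ) y τ t.2.2)
        - wC (x + Real.pi * τ) y τ t.1 *
          (wC (x + Real.pi * τ) y τ t.2.1 * wC (x + Real.pi * τ) y τ t.2.2))))]
  exact tsum_congr fun t => key x y τ t
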